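/- arXiv:1410.8349 — 2 statements merged into one kernel-verified Lean document; each statement's English description precedes it below -/
import Mathlib

section
/- If an undirected graph G can be partitioned into k vertex-disjoint cliques, then the guessing game (G,s) admits a strategy winning with probability s^{-k}; hence gn(G,s) ≥ |V(G)| − κ(G), where κ(G) is the minimum clique cover number. -/
/-- A pure strategy for the guessing game on the digraph with edge relation `E`
and alphabet `Fin s`: each player `v` guesses based only on the values of its
in-neighbours. -/
structure GuessStrategy (V : Type*) (E : V → V → Prop) (s : ℕ) where
  f : V → (V → Fin s) → Fin s
  local_dep : ∀ v a b, (∀ u, E u v → a u = b u) → f v a = f v b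

/-- The number of assignments on which every player guesses correctly. -/
noncomputable def winCount {V : Type*} [Fintype V] (E : V → V → Prop) (s : ℕ)
    (F : GuessStrategy V E s) : ℕ :=
  Nat.card {a : V → Fin s // ∀ v, F.f v a = a v}

/-- The winning probability of strategy `F` in the guessing game `(G,s)`. -/
noncomputable def winP {V : Type*} [Fintype V] (E : V → V → Prop) (s : ℕ)
    (F : GuessStrategy V E s) : ℝ :=
  (winCount E s F : ℝ) / (s ^ Fintype.card V : ℕ)

/-- The maximum winning probability over all strategies. -/
noncomputable def maxWinP {V : Type*} [Fintype V] (E : V → V → Prop) (s : ℕ) : ℝ :=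
  ⨆ F : GuessStrategy V E s, winP E s F

/-- The guessing number `gn(G,s) = |V(G)| + log_s (max winning probability)`. -/
noncomputable def gn {V : Type*} [Fintype V] (E : V → V → Prop) (s : ℕ) : ℝ :=
  Fintype.card V + Real.logb s (maxWinP E s)

/-- The `t`-uniform blowup of a digraph: each vertex is replaced by `t` copies. -/
def blowup {V : Type*} (E : V → V → Prop) (t : ℕ) : V × Fin t → V × Fin t → Prop :=
  fun p q => E p.1 q.1

/-- The minimum clique cover number `κ(G)`: the least number of cliques into which the
vertex set of `G` can be partitioned. -/
noncomputable def cliqueCoverNum {V : Type*} [Fintype V] [DecidableEq V]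
    (G : SimpleGraph V) : ℕ :=
  sInf {n | ∃ P : Finpartition (Finset.univ : Finset V),
    P.parts.card = n ∧ ∀ p ∈ P.parts, G.IsClique (p : Set V)}

/-- A fractional clique cover of `G`: a weighting `w : K(G) → [0,1]` of the cliques with
total weight at least `1` on the cliques containing any given vertex. -/
def IsFracCliqueCover {V : Type*} [Fintype V] [DecidableEq V] (G : SimpleGraph V)
    (w : Finset V → ℝ) : Prop :=
  (∀ k, 0 ≤ w k ∧ w k ≤ 1) ∧ (∀ k, w k ≠ 0 → G.IsClique (k : Set V)) ∧
  ∀ v : V, 1 ≤ ∑ k ∈ Finset.univ.filter (fun k : Finset V => v ∈ k), w k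

/-- A regular fractional clique cover: the total weight on the cliques containing any
given vertex is exactly `1`. -/
def IsRegFracCliqueCover {V : Type*} [Fintype V] [DecidableEq V] (G : SimpleGraph V)
    (w : Finset V → ℝ) : Prop :=
  (∀ k, 0 ≤ w k ∧ w k ≤ 1) ∧ (∀ k, w k ≠ 0 → G.IsClique (k : Set V)) ∧
  ∀ v : V, ∑ k ∈ Finset.univ.filter (fun k : Finset V => v ∈ k), w k = 1

/-- The fractional clique cover number `κ_f(G)`. -/
noncomputable def fracCliqueCoverNum {V : Type*} [Fintype V] [DecidableEq V]
    (G : SimpleGraph V) : ℝ :=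
  sInf {x : ℝ | ∃ w : Finset V → ℝ, IsFracCliqueCover G w ∧ x = ∑ k : Finset V, w k}

/-- The `t`-uniform blowup of a simple graph. -/
def SimpleGraph.blowupG {V : Type*} (G : SimpleGraph V) (t : ℕ) :
    SimpleGraph (V × Fin t) where
  Adj p q := G.Adj p.1 q.1
  symm := ⟨fun _ _ h => G.adj_symm h⟩
  loopless := ⟨fun p h => G.irrefl h⟩

lemma winP_le_one' {V : Type*} [Fintype V] (E : V → V → Prop) (s : ℕ) (hs : 1 ≤ s)
    (F : GuessStrategy V E s) : winP E s F ≤ 1 := by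
  classical
  have hpos : (0:ℝ) < ((s ^ Fintype.card V : ℕ) : ℝ) := by
    have : 0 < s := hs
    positivity
  rw [winP, div_le_one hpos]
  have : winCount E s F ≤ s ^ Fintype.card V := by
    rw [winCount]
    calc Nat.card {a : V → Fin s // ∀ v, F.f v a = a v}
        ≤ Nat.card (V → Fin s) :=
          Nat.card_le_card_of_injective _ Subtype.val_injective
      _ = s ^ Fintype.card V := by
          simp [Nat.card_eq_fintype_card, Fintype.card_fun]
  exact_mod_cast this

lemma exists_strategy_of_partition {V : Type*} [Fintype V] [DecidableEq V]
    (G : SimpleGraph V) (s : ℕ) (hs : 1 ≤ s) (P : Finpartition (Finset.univ : Finset V))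
    (hP : ∀ p ∈ P.parts, G.IsClique (p : Set V)) :
    ∃ F : GuessStrategy V G.Adj s, winP G.Adj s F = ((1 : ℝ) / s) ^ P.parts.card := by
  classical
  haveI : NeZero s := ⟨by omega⟩
  set pt : V → Finset V := fun v => P.part v with hpt
  have hptmem : ∀ v, pt v ∈ P.parts := fun v => P.part_mem.mpr (Finset.mem_univ v)
  have hvpt : ∀ v, v ∈ pt v := fun v => P.mem_part (Finset.mem_univ v)
  have hpteq : ∀ (v : V) (p : Finset V), p ∈ P.parts → v ∈ p → pt v = p :=
    fun v p hp hvp => P.part_eq_of_mem hp hvp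
  -- the strategy
  set f : V → (V → Fin s) → Fin s := fun v a => -∑ u ∈ (pt v).erase v, a u with hf
  have hdep : ∀ v a b, (∀ u, G.Adj u v → a u = b u) → f v a = f v b := by
    intro v a b hab
    simp only [hf]
    congr 1
    refine Finset.sum_congr rfl fun u hu => hab u ?_
    exact hP _ (hptmem v) (Finset.mem_coe.mpr (Finset.mem_of_mem_erase hu))
      (Finset.mem_coe.mpr (hvpt v)) (Finset.ne_of_mem_erase hu)
  -- winning characterization
  have hwin : ∀ a : V → Fin s,
      (∀ v, f v a = a v) ↔ ∀ p ∈ P.parts, ∑ u ∈ p, a u = 0 := by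
    intro a
    constructor
    · intro h p hp
      obtain ⟨v, hv⟩ := P.nonempty_of_mem_parts hp
      have hptv : pt v = p := hpteq v p hp hv
      rw [← hptv] at hv ⊢
      rw [← Finset.add_sum_erase _ a hv, ← h v]
      simp [hf]
    · intro h v
      have := h (pt v) (hptmem v)
      rw [← Finset.add_sum_erase _ a (hvpt v)] at this
      simpa [hf] using neg_eq_of_add_eq_zero_left this
  -- representatives
  set rep : {p // p ∈ P.parts} → V := fun p => (P.nonempty_of_mem_parts p.2).choose
    with hrepdef
  have hrepmem : ∀ p, rep p ∈ p.1 := fun p => (P.nonempty_of_mem_parts p.2).choose_spec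
  set R : Finset V := P.parts.attach.image rep with hR
  have hrepinj : Function.Injective rep := by
    intro p q h
    exact Subtype.ext (P.eq_of_mem_parts p.2 q.2 (h ▸ hrepmem p) (hrepmem q))
  have hRcard : R.card = P.parts.card := by
    rw [hR, Finset.card_image_of_injective _ hrepinj, Finset.card_attach]
  have hmemR : ∀ v, v ∈ R ↔ ∃ p, rep p = v := by
    intro v
    simp [hR, Finset.mem_image]
  have hnotR : ∀ v ∈ R, ∀ u ∈ (pt v).erase v, u ∉ R := by
    intro v hv u hu hu'
    obtain ⟨p, hp⟩ := (hmemR v).mp hv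
    obtain ⟨q, hq⟩ := (hmemR u).mp hu'
    have hptv : pt v = p.1 := hpteq v p.1 p.2 (hp ▸ hrepmem p)
    have huq : u ∈ q.1 := hq ▸ hrepmem q
    have hup : u ∈ p.1 := by rw [← hptv]; exact Finset.mem_of_mem_erase hu
    have : p = q := Subtype.ext (P.eq_of_mem_parts p.2 q.2 hup huq)
    exact Finset.ne_of_mem_erase hu (by rw [← hq, ← this, hp])
  -- the inverse assignment
  set A : ({v : V // v ∉ R} → Fin s) → V → Fin s := fun b v =>
    if h : v ∈ R then -∑ u ∈ (pt v).erase v,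
      (fun u => if h' : u ∈ R then 0 else b ⟨u, h'⟩) u
    else b ⟨v, h⟩ with hA
  have hAoff : ∀ b (v : V) (h : v ∉ R), A b v = b ⟨v, h⟩ := by
    intro b v h; simp [hA, h]
  have hArep : ∀ b (v : V), v ∈ R → A b v = -∑ u ∈ (pt v).erase v, A b u := by
    intro b v h
    rw [hA]
    simp only [dif_pos h]
    congr 1
    refine Finset.sum_congr rfl fun u hu => ?_
    have hu' : u ∉ R := hnotR v h u hu
    simp [hA, hu']
  clear hA hrepdef hR hf hpt
  clear_value A R
  have hAwin : ∀ b, ∀ v, f v (A b) = A b v := by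
    intro b
    rw [hwin]
    intro p hp
    set r : V := rep ⟨p, hp⟩ with hr
    have hrp : r ∈ p := hrepmem ⟨p, hp⟩
    have hrR : r ∈ R := (hmemR r).mpr ⟨⟨p, hp⟩, rfl⟩
    have hptr : pt r = p := hpteq r p hp hrp
    rw [← Finset.add_sum_erase _ (A b) hrp, hArep b r hrR, hptr, neg_add_cancel]
  -- the equivalence
  refine ⟨⟨f, hdep⟩, ?_⟩
  have hcount : winCount G.Adj s ⟨f, hdep⟩ = s ^ (Fintype.card V - P.parts.card) := by
    rw [winCount]
    have e : {a : V → Fin s // ∀ v, f v a = a v} ≃ ({v : V // v ∉ R} → Fin s) :=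
      { toFun := fun a v => a.1 v.1
        invFun := fun b => ⟨A b, hAwin b⟩
        left_inv := by
          intro a
          apply Subtype.ext
          funext v
          show A (fun u => a.1 u.1) v = a.1 v
          by_cases h : v ∈ R
          · refine (hArep _ v h).trans ?_
            have := (hwin a.1).mp a.2 (pt v) (hptmem v)
            rw [← Finset.add_sum_erase _ a.1 (hvpt v)] at this
            rw [← neg_eq_of_add_eq_zero_left this]
            congr 1
            refine Finset.sum_congr rfl fun u hu => ?_
            exact hAoff _ u (hnotR v h u hu)
          · exact hAoff _ v h
        right_inv := by
          intro b
          funext v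
          exact hAoff b v.1 v.2 }
    rw [Nat.card_congr e, Nat.card_eq_fintype_card, Fintype.card_fun, Fintype.card_fin]
    congr 1
    rw [Fintype.card_subtype_compl, ← hRcard]
    congr 1
    simp [Fintype.card_subtype]
  have hkn : P.parts.card ≤ Fintype.card V := by
    rw [← hRcard]
    exact Finset.card_le_univ R
  have hs0 : (0:ℝ) < (s:ℝ) := by exact_mod_cast hs
  rw [winP, hcount]
  push_cast
  rw [div_pow, one_pow, div_eq_div_iff (by positivity) (by positivity), one_mul,
    ← pow_add]
  congr 1
  omega

/-- If an undirected graph `G` is partitioned into `k` vertex-disjoint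
cliques, then the guessing game `(G,s)` admits a strategy winning with probability
`s^{-k}`; hence `gn(G,s) ≥ |V(G)| − κ(G)`. -/
theorem cliqueCover_strategy {V : Type*} [Fintype V] [DecidableEq V] (G : SimpleGraph V)
    (s k : ℕ) (hs : 1 ≤ s) (P : Finpartition (Finset.univ : Finset V))
    (hP : ∀ p ∈ P.parts, G.IsClique (p : Set V)) (hk : P.parts.card = k) :
    (∃ F : GuessStrategy V G.Adj s, winP G.Adj s F = ((1 : ℝ) / s) ^ k) ∧
    gn G.Adj s ≥ Fintype.card V - cliqueCoverNum G := by
  classical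
  constructor
  · obtain ⟨F, hF⟩ := exists_strategy_of_partition G s hs P hP
    exact ⟨F, by rw [hF, hk]⟩
  · -- the clique cover number is attained
    have hne : (cliqueCoverNum G) ∈ {n | ∃ P : Finpartition (Finset.univ : Finset V),
        P.parts.card = n ∧ ∀ p ∈ P.parts, G.IsClique (p : Set V)} := by
      apply Nat.sInf_mem
      exact ⟨k, P, hk, hP⟩
    obtain ⟨P', hk', hP'⟩ := hne
    obtain ⟨F', hF'⟩ := exists_strategy_of_partition G s hs P' hP'
    rw [hk'] at hF'
    have hbdd : BddAbove (Set.range (winP G.Adj s)) :=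
      ⟨1, by rintro x ⟨F, rfl⟩; exact winP_le_one' G.Adj s hs F⟩
    have hle : ((1:ℝ)/s) ^ cliqueCoverNum G ≤ maxWinP G.Adj s := by
      rw [← hF']
      exact le_ciSup hbdd F'
    have hs0 : (0:ℝ) < (s:ℝ) := by exact_mod_cast hs
    rcases eq_or_lt_of_le hs with h1 | h2
    · -- s = 1 : logb 1 _ = 0
      have : (s:ℝ) = 1 := by exact_mod_cast h1.symm
      rw [gn, this, ge_iff_le, Real.logb, Real.log_one, div_zero, add_zero]
      have : (0:ℝ) ≤ (cliqueCoverNum G : ℝ) := by positivity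
      linarith
    · have hs1 : (1:ℝ) < (s:ℝ) := by exact_mod_cast h2
      have hpos : (0:ℝ) < ((1:ℝ)/s) ^ cliqueCoverNum G := by positivity
      have hlog : Real.logb s (((1:ℝ)/s) ^ cliqueCoverNum G)
          ≤ Real.logb s (maxWinP G.Adj s) :=
        Real.logb_le_logb_of_le hs1 hpos hle
      have hcalc : Real.logb s (((1:ℝ)/s) ^ cliqueCoverNum G)
          = -(cliqueCoverNum G : ℝ) := by
        rw [Real.logb_pow, one_div, Real.logb_inv, Real.logb_self_eq_one hs1]
        ring
      rw [hcalc] at hlog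
      rw [gn, ge_iff_le, sub_le_iff_le_add]
      linarith
end

section
/- Given a digraph G and an induced subgraph G' obtained by deleting some vertices, for every alphabet size s the maximum winning probability of the guessing game on G is at most that on G'; equivalently gn(G,s) ≤ |V(G)| − |V(G')| + gn(G',s), and hence gn(G) ≤ |V(G)| − |V(G')| + gn(G'). In particular, gn(G) ≤ |V(G)| − α(G) where α(G) is the independence number. -/
/-- The independence number of a digraph: the largest size of a set of vertices with no
edges between its members. -/
noncomputable def indepNum {V : Type*} [Fintype V] (E : V → V → Prop) : ℕ :=
  sSup {n | ∃ I : Finset V, I.card = n ∧ ∀ u ∈ I, ∀ v ∈ I, ¬ E u v}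

section Aux
variable {V : Type*} [Fintype V] [DecidableEq V] (E : V → V → Prop)

instance gsFinite (s : ℕ) : Finite (GuessStrategy V E s) :=
  Finite.of_injective (fun F => F.f) (by rintro ⟨f, _⟩ ⟨g, _⟩ h; simpa using h)

def constStrategy (s : ℕ) (hs : 0 < s) : GuessStrategy V E s :=
  ⟨fun _ _ => ⟨0, hs⟩, fun _ _ _ _ => rfl⟩

lemma winP_le_maxWinP (s : ℕ) (F : GuessStrategy V E s) : winP E s F ≤ maxWinP E s :=
  le_ciSup (Set.Finite.bddAbove (Set.finite_range _)) F

lemma nat_card_sigma {ι : Type*} [Fintype ι] (T : ι → Type*) [∀ i, Finite (T i)] :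
    Nat.card (Σ i, T i) = ∑ i, Nat.card (T i) := by
  classical
  have : ∀ i, Fintype (T i) := fun i => Fintype.ofFinite (T i)
  simp [Nat.card_eq_fintype_card, Fintype.card_sigma]

set_option linter.unusedSectionVars false

lemma key_count (W : Finset V) (s : ℕ) (hs : 0 < s) (F : GuessStrategy V E s) :
    ∃ F' : GuessStrategy {v // v ∈ W} (fun a b : {v // v ∈ W} => E a b) s,
      winCount E s F ≤
        s ^ (Fintype.card V - W.card) * winCount (fun a b : {v // v ∈ W} => E a b) s F' := by
  classical
  haveI : Nonempty (Fin s) := ⟨⟨0, hs⟩⟩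
  set C := {v : V // v ∉ W} with hC
  let glue : ({v // v ∈ W} → Fin s) → (C → Fin s) → V → Fin s :=
    fun a c v => if h : v ∈ W then a ⟨v, h⟩ else c ⟨v, h⟩
  let Fc : (C → Fin s) → GuessStrategy {v // v ∈ W} (fun a b : {v // v ∈ W} => E a b) s :=
    fun c => ⟨fun w a => F.f w (glue a c), by
      intro v a b hab
      apply F.local_dep
      intro u hu
      simp only [glue]
      split
      · next h => exact hab ⟨u, h⟩ hu
      · rfl⟩
  let T : (C → Fin s) → Type _ := fun c => {b : {v // v ∈ W} → Fin s // ∀ w, (Fc c).f w b = b w}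
  have hwin : ∀ (a : {a : V → Fin s // ∀ v, F.f v a = a v}) (w : {v // v ∈ W}),
      (Fc (fun u : C => a.1 u)).f w (fun w => a.1 w) = (fun w : {v // v ∈ W} => a.1 w) w := by
    intro a w
    show F.f w (glue (fun w : {v // v ∈ W} => a.1 w) (fun u : C => a.1 u)) = a.1 w
    have hg : glue (fun w : {v // v ∈ W} => a.1 w) (fun u : C => a.1 u) = a.1 := by
      funext v; simp only [glue]; split <;> rfl
    rw [hg]; exact a.2 w
  let Φ : {a : V → Fin s // ∀ v, F.f v a = a v} → Σ c, T c :=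
    fun a => ⟨fun u => a.1 u, ⟨fun w => a.1 w, hwin a⟩⟩
  have hΦ : Function.Injective Φ := by
    intro a b hab
    have hrec : ∀ x : {a : V → Fin s // ∀ v, F.f v a = a v},
        x.1 = fun v => if h : v ∈ W then (Φ x).2.1 ⟨v, h⟩ else (Φ x).1 ⟨v, h⟩ := by
      intro x; funext v; dsimp [Φ]; split <;> rfl
    apply Subtype.ext
    rw [hrec a, hrec b, hab]
  have h1 : winCount E s F ≤ Nat.card (Σ c, T c) := Nat.card_le_card_of_injective Φ hΦ
  rw [nat_card_sigma] at h1
  obtain ⟨c₀, hc₀⟩ := Finite.exists_max (fun c => Nat.card (T c))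
  refine ⟨Fc c₀, h1.trans ?_⟩
  have h2 : ∑ c : C → Fin s, Nat.card (T c) ≤ Fintype.card (C → Fin s) * Nat.card (T c₀) := by
    simpa using Finset.sum_le_card_nsmul Finset.univ (fun c => Nat.card (T c)) _
      (fun c _ => hc₀ c)
  have h3 : Fintype.card (C → Fin s) = s ^ (Fintype.card V - W.card) := by
    rw [Fintype.card_fun, Fintype.card_fin]
    congr 1
    simp only [C]
    rw [Fintype.card_subtype_compl, Fintype.card_coe]
  rw [h3] at h2
  exact h2

lemma maxWinP_mono (W : Finset V) (s : ℕ) (hs : 1 ≤ s) :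
    maxWinP E s ≤ maxWinP (fun a b : {v // v ∈ W} => E a b) s := by
  haveI : Nonempty (GuessStrategy V E s) := ⟨constStrategy E s hs⟩
  apply ciSup_le
  intro F
  obtain ⟨F', hF'⟩ := key_count E W s hs F
  refine le_trans ?_ (winP_le_maxWinP _ s F')
  unfold winP
  have hk : W.card ≤ Fintype.card V := W.card_le_univ
  have hcard : Fintype.card {v // v ∈ W} = W.card := Fintype.card_coe W
  rw [hcard]
  have hs0 : (0:ℝ) < (s : ℝ) := by exact_mod_cast hs
  push_cast
  rw [div_le_div_iff₀ (pow_pos hs0 _) (pow_pos hs0 _)]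
  have h1 : (winCount E s F : ℝ) ≤
      (s:ℝ) ^ (Fintype.card V - W.card) * winCount (fun a b : {v // v ∈ W} => E a b) s F' := by
    exact_mod_cast hF'
  have h2 : (s:ℝ) ^ (Fintype.card V - W.card) * (s:ℝ) ^ W.card = (s:ℝ) ^ Fintype.card V := by
    rw [← pow_add]; congr 1; omega
  have h3 := mul_le_mul_of_nonneg_right h1 (le_of_lt (pow_pos hs0 W.card))
  nlinarith [h3, h2]

lemma maxWinP_pos (s : ℕ) (hs : 0 < s) : 0 < maxWinP E s := by
  refine lt_of_lt_of_le ?_ (winP_le_maxWinP E s (constStrategy E s hs))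
  unfold winP winCount
  apply div_pos
  · have : Nonempty {a : V → Fin s // ∀ v, (constStrategy E s hs).f v a = a v} :=
      ⟨⟨fun _ => ⟨0, hs⟩, fun _ => rfl⟩⟩
    exact_mod_cast Nat.card_pos
  · exact_mod_cast pow_pos hs _

lemma gn_mono (W : Finset V) (s : ℕ) (hs : 2 ≤ s) :
    gn E s ≤ (Fintype.card V - W.card : ℝ) + gn (fun a b : {v // v ∈ W} => E a b) s := by
  unfold gn
  rw [Fintype.card_coe]
  have hb : (1:ℝ) < (s:ℝ) := by exact_mod_cast hs
  have hlog := Real.logb_le_logb_of_le hb (maxWinP_pos E s (by omega))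
    (maxWinP_mono E W s (by omega))
  have hk : (W.card : ℝ) ≤ (Fintype.card V : ℝ) := by
    exact_mod_cast W.card_le_univ
  linarith

end Aux

lemma gn_indep {U : Type*} [Fintype U] [DecidableEq U] (E : U → U → Prop)
    (hind : ∀ u v, ¬ E u v) (s : ℕ) (hs : 2 ≤ s) : gn E s = 0 := by
  have hs0 : 0 < s := by omega
  have hwc : ∀ F : GuessStrategy U E s, winCount E s F = 1 := by
    intro F
    unfold winCount
    rw [Nat.card_eq_one_iff_unique]
    set c : U → Fin s := fun v => F.f v (fun _ => ⟨0, hs0⟩) with hc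
    have hconst : ∀ v a, F.f v a = c v :=
      fun v a => F.local_dep v a _ (fun u hu => absurd hu (hind u v))
    constructor
    · constructor
      intro a b
      apply Subtype.ext; funext v
      rw [← a.2 v, ← b.2 v, hconst, hconst]
    · exact ⟨⟨c, fun v => hconst v c⟩⟩
  haveI : Nonempty (GuessStrategy U E s) := ⟨constStrategy E s hs0⟩
  have hmax : maxWinP E s = ((s : ℝ) ^ Fintype.card U)⁻¹ := by
    unfold maxWinP
    have hP : ∀ F : GuessStrategy U E s, winP E s F = ((s : ℝ) ^ Fintype.card U)⁻¹ := by
      intro F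
      unfold winP
      rw [hwc]
      push_cast
      rw [one_div]
    simp only [hP]
    exact ciSup_const
  unfold gn
  rw [hmax, Real.logb_inv, Real.logb_pow,
    Real.logb_self_eq_one (by exact_mod_cast hs)]
  ring

lemma limit_bound {V : Type*} [Fintype V] [DecidableEq V] (E : V → V → Prop)
    (W : Finset V) (L L' : ℝ)
    (hL : Filter.Tendsto (fun s : ℕ => gn E s) Filter.atTop (nhds L))
    (hL' : Filter.Tendsto (fun s : ℕ => gn (fun a b : {v // v ∈ W} => E a b) s)
      Filter.atTop (nhds L')) :
    L ≤ (Fintype.card V - W.card : ℝ) + L' := by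
  have hev : ∀ᶠ s : ℕ in Filter.atTop,
      gn E s ≤ (Fintype.card V - W.card : ℝ) + gn (fun a b : {v // v ∈ W} => E a b) s :=
    Filter.eventually_atTop.2 ⟨2, fun s hs => gn_mono E W s hs⟩
  exact le_of_tendsto_of_tendsto hL (tendsto_const_nhds.add hL') hev


/-- For a digraph `G` and the induced subgraph `G'` on a vertex subset
`W`: for every `s` the maximum winning probability on `G` is at most that on `G'`;
equivalently `gn(G,s) ≤ |V(G)| − |V(G')| + gn(G',s)`, hence
`gn(G) ≤ |V(G)| − |V(G')| + gn(G')`; in particular `gn(G) ≤ |V(G)| − α(G)`. -/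
theorem induced_subgraph_bound {V : Type*} [Fintype V] [DecidableEq V]
    (E : V → V → Prop) (hE : Irreflexive E) (W : Finset V) :
    (∀ s : ℕ, 1 ≤ s →
      maxWinP E s ≤ maxWinP (fun a b : {v // v ∈ W} => E a b) s) ∧
    (∀ s : ℕ, 2 ≤ s →
      gn E s ≤ (Fintype.card V - W.card : ℝ) + gn (fun a b : {v // v ∈ W} => E a b) s) ∧
    (∀ L L' : ℝ,
      Filter.Tendsto (fun s : ℕ => gn E s) Filter.atTop (nhds L) →
      Filter.Tendsto (fun s : ℕ => gn (fun a b : {v // v ∈ W} => E a b) s)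
        Filter.atTop (nhds L') →
      L ≤ (Fintype.card V - W.card : ℝ) + L') ∧
    (∀ L : ℝ, Filter.Tendsto (fun s : ℕ => gn E s) Filter.atTop (nhds L) →
      L ≤ (Fintype.card V : ℝ) - indepNum E) := by
  classical
  refine ⟨fun s hs => maxWinP_mono E W s hs, fun s hs => gn_mono E W s hs,
    fun L L' hL hL' => limit_bound E W L L' hL hL', ?_⟩
  intro L hL
  have hne : {n | ∃ I : Finset V, I.card = n ∧ ∀ u ∈ I, ∀ v ∈ I, ¬ E u v}.Nonempty :=
    ⟨0, ∅, by simp⟩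
  have hbdd : BddAbove {n | ∃ I : Finset V, I.card = n ∧ ∀ u ∈ I, ∀ v ∈ I, ¬ E u v} :=
    ⟨Fintype.card V, by rintro n ⟨I, rfl, -⟩; exact Finset.card_le_univ I⟩
  obtain ⟨I, hIcard, hIind⟩ := Nat.sSup_mem hne hbdd
  have h0 : Filter.Tendsto (fun s : ℕ => gn (fun a b : {v // v ∈ I} => E a b) s)
      Filter.atTop (nhds 0) := by
    apply Filter.Tendsto.congr' _
      (tendsto_const_nhds : Filter.Tendsto (fun _ : ℕ => (0:ℝ)) Filter.atTop (nhds 0))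
    filter_upwards [Filter.eventually_ge_atTop 2] with s hs
    exact (gn_indep _ (fun (u v : {x // x ∈ I}) h => hIind u u.2 v v.2 h) s hs).symm
  have := limit_bound E I L 0 hL h0
  rw [hIcard] at this
  unfold indepNum
  linarith
end
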